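/- For any pairwise distinct real (or complex) numbers $h_1,\dots,h_{n+1}$ with $n \geq 2$, the sum $\sum_{1 \leq i < j \leq n+1} \frac{\prod_{a=0}^{2n-3} (a h_i + (2n-3-a) h_j)}{\prod_{k \neq i,j} (h_i - h_k)(h_j - h_k)}$ is independent of the choice of $h_1,\dots,h_{n+1}$ (i.e., it equals the same value for all such tuples). -/

import Mathlib

open Finset Polynomial

noncomputable def Nprod (n : ℕ) (x y : ℂ) : ℂ :=
  ∏ a ∈ Finset.range (2 * n - 2), ((a : ℂ) * x + ((2 * n - 3 - a : ℕ) : ℂ) * y)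

noncomputable def ee (n : ℕ) (x y : ℂ) : ℂ := (x - y) * (y - x) * Nprod n x y

noncomputable def Gp (n : ℕ) : MvPolynomial (Fin 2) ℂ :=
  (MvPolynomial.X 0 - MvPolynomial.X 1) * (MvPolynomial.X 1 - MvPolynomial.X 0) *
    ∏ a ∈ Finset.range (2 * n - 2),
      (MvPolynomial.C (a : ℂ) * MvPolynomial.X 0 +
        MvPolynomial.C ((2 * n - 3 - a : ℕ) : ℂ) * MvPolynomial.X 1)

lemma he (n : ℕ) (x y : ℂ) : ee n x y = MvPolynomial.eval ![x, y] (Gp n) := by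
  simp [ee, Nprod, Gp, MvPolynomial.eval_prod]

lemma hsym (n : ℕ) (hn : 2 ≤ n) (x y : ℂ) : ee n x y = ee n y x := by
  have hN : Nprod n x y = Nprod n y x := by
    unfold Nprod
    rw [← Finset.prod_range_reflect (fun a => ((a : ℂ) * y + ((2 * n - 3 - a : ℕ) : ℂ) * x))
      (2 * n - 2)]
    refine Finset.prod_congr rfl fun a ha => ?_
    rw [Finset.mem_range] at ha
    have h1 : 2 * n - 2 - 1 - a = 2 * n - 3 - a := by omega
    have h2 : 2 * n - 3 - (2 * n - 3 - a) = a := by omega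
    rw [h1, h2]
    ring
  unfold ee
  rw [hN]; ring

lemma hGdeg (n : ℕ) (hn : 2 ≤ n) : (Gp n).totalDegree ≤ 2 * n := by
  unfold Gp
  have h1 : (MvPolynomial.X 0 - MvPolynomial.X 1 : MvPolynomial (Fin 2) ℂ).totalDegree ≤ 1 := by
    rw [sub_eq_add_neg]
    refine le_trans (MvPolynomial.totalDegree_add _ _) ?_
    simp [MvPolynomial.totalDegree_X, MvPolynomial.totalDegree_neg]
  have h2 : (MvPolynomial.X 1 - MvPolynomial.X 0 : MvPolynomial (Fin 2) ℂ).totalDegree ≤ 1 := by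
    rw [sub_eq_add_neg]
    refine le_trans (MvPolynomial.totalDegree_add _ _) ?_
    simp [MvPolynomial.totalDegree_X, MvPolynomial.totalDegree_neg]
  have hlin : ∀ c d : ℂ, (MvPolynomial.C c * MvPolynomial.X 0 +
      MvPolynomial.C d * MvPolynomial.X (1 : Fin 2)).totalDegree ≤ 1 := by
    intro c d
    refine le_trans (MvPolynomial.totalDegree_add _ _) (max_le ?_ ?_) <;>
      refine le_trans (MvPolynomial.totalDegree_mul _ _) ?_ <;> simp
  have h3 : (∏ a ∈ Finset.range (2 * n - 2),
      (MvPolynomial.C (a : ℂ) * MvPolynomial.X 0 +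
        MvPolynomial.C ((2 * n - 3 - a : ℕ) : ℂ) * MvPolynomial.X (1 : Fin 2))).totalDegree
      ≤ 2 * n - 2 := by
    refine le_trans (MvPolynomial.totalDegree_finset_prod _ _) ?_
    refine le_trans (Finset.sum_le_sum fun a _ => hlin (a : ℂ) _) ?_
    simp
  calc (_ : ℕ) ≤ 1 + 1 + (2 * n - 2) := by
        refine le_trans (MvPolynomial.totalDegree_mul _ _) ?_
        exact add_le_add (le_trans (MvPolynomial.totalDegree_mul _ _) (add_le_add h1 h2)) h3
    _ ≤ 2 * n := by omega

noncomputable def Dd (n : ℕ) (h : Fin (n + 1) → ℂ) (i : Fin (n + 1)) : ℂ :=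
  ∏ k ∈ Finset.univ.erase i, (h i - h k)

noncomputable def tt (n : ℕ) (h : Fin (n + 1) → ℂ) (i j : Fin (n + 1)) : ℂ :=
  ee n (h i) (h j) / (Dd n h i * Dd n h j)

lemma hDne (n : ℕ) (h : Fin (n + 1) → ℂ) (hdist : Function.Injective h) (i : Fin (n + 1)) :
    Dd n h i ≠ 0 := by
  unfold Dd
  rw [Finset.prod_ne_zero_iff]
  intro k hk
  exact sub_ne_zero_of_ne fun e => (Finset.mem_erase.mp hk).1 (hdist e).symm

lemma pair_eq (n : ℕ) (h : Fin (n + 1) → ℂ) (hdist : Function.Injective h)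
    (i j : Fin (n + 1)) (hij : i ≠ j) :
    (∏ a ∈ Finset.range (2 * n - 2), ((a : ℂ) * h i + ((2 * n - 3 - a : ℕ) : ℂ) * h j)) /
      ∏ k ∈ Finset.univ \ {i, j}, ((h i - h k) * (h j - h k)) = tt n h i j := by
  have hset1 : (Finset.univ : Finset (Fin (n + 1))) \ {i, j} = (Finset.univ.erase i).erase j := by
    ext k
    simp only [Finset.mem_sdiff, Finset.mem_erase, Finset.mem_univ, Finset.mem_insert,
      Finset.mem_singleton, true_and]
    tauto
  have hset2 : (Finset.univ : Finset (Fin (n + 1))) \ {i, j} = (Finset.univ.erase j).erase i := by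
    ext k
    simp only [Finset.mem_sdiff, Finset.mem_erase, Finset.mem_univ, Finset.mem_insert,
      Finset.mem_singleton, true_and]
    tauto
  have hji : j ∈ Finset.univ.erase i := Finset.mem_erase.mpr ⟨hij.symm, Finset.mem_univ j⟩
  have hijm : i ∈ Finset.univ.erase j := Finset.mem_erase.mpr ⟨hij, Finset.mem_univ i⟩
  have hDi : Dd n h i = (h i - h j) * ∏ k ∈ Finset.univ \ {i, j}, (h i - h k) := by
    rw [hset1, Dd, ← Finset.mul_prod_erase _ _ hji]
  have hDj : Dd n h j = (h j - h i) * ∏ k ∈ Finset.univ \ {i, j}, (h j - h k) := by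
    rw [hset2, Dd, ← Finset.mul_prod_erase _ _ hijm]
  have hP1 : (∏ k ∈ Finset.univ \ {i, j}, (h i - h k)) ≠ 0 := by
    rw [Finset.prod_ne_zero_iff]
    intro k hk
    rw [hset1] at hk
    exact sub_ne_zero_of_ne fun e => (Finset.mem_erase.mp (Finset.mem_of_mem_erase hk)).1
      (hdist e).symm
  have hP2 : (∏ k ∈ Finset.univ \ {i, j}, (h j - h k)) ≠ 0 := by
    rw [Finset.prod_ne_zero_iff]
    intro k hk
    rw [hset2] at hk
    exact sub_ne_zero_of_ne fun e => (Finset.mem_erase.mp (Finset.mem_of_mem_erase hk)).1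
      (hdist e).symm
  rw [Finset.prod_mul_distrib, tt, div_eq_div_iff (mul_ne_zero hP1 hP2)
    (mul_ne_zero (hDne n h hdist i) (hDne n h hdist j)), hDi, hDj, ee, Nprod]
  ring

lemma lag_sum (n m : ℕ) (h : Fin (n + 1) → ℂ) (hdist : Function.Injective h) (hm : m ≤ n) :
    ∑ i : Fin (n + 1), h i ^ m * (∏ k ∈ Finset.univ.erase i, (h i - h k))⁻¹ =
      if m = n then 1 else 0 := by
  have hinj : Set.InjOn h (Finset.univ : Finset (Fin (n + 1))) := hdist.injOn
  have hdeg : ((X : ℂ[X]) ^ m).degree < (Finset.univ : Finset (Fin (n + 1))).card := by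
    rw [Polynomial.degree_X_pow, Finset.card_univ, Fintype.card_fin]
    exact_mod_cast Nat.lt_succ_of_le hm
  have hint := Lagrange.eq_interpolate hinj hdeg
  have hco := congrArg (fun p : ℂ[X] => p.coeff n) hint
  simp only [coeff_X_pow, Lagrange.interpolate_apply, Polynomial.finset_sum_coeff,
    Polynomial.coeff_C_mul, eval_pow, eval_X] at hco
  have hb : ∀ i : Fin (n + 1), (Lagrange.basis Finset.univ h i).coeff n =
      (∏ k ∈ Finset.univ.erase i, (h i - h k))⁻¹ := by
    intro i
    have hnd : (Lagrange.basis Finset.univ h i).natDegree = n := by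
      simp [Lagrange.natDegree_basis hinj (mem_univ i)]
    have hlc : (Lagrange.basis Finset.univ h i).coeff n =
        (Lagrange.basis Finset.univ h i).leadingCoeff := by
      rw [Polynomial.leadingCoeff, hnd]
    rw [hlc, Lagrange.basis, Polynomial.leadingCoeff_prod, ← Finset.prod_inv_distrib]
    refine Finset.prod_congr rfl fun k hk => ?_
    rw [Lagrange.basisDivisor, Polynomial.leadingCoeff_mul, Polynomial.leadingCoeff_C,
      (Polynomial.monic_X_sub_C (h k)).leadingCoeff, mul_one]
  simp only [hb] at hco
  rw [← hco]
  simp [eq_comm]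

lemma hLs (n : ℕ) (h : Fin (n + 1) → ℂ) (hdist : Function.Injective h) (m : ℕ) (hm : m ≤ n) :
    ∑ i : Fin (n + 1), h i ^ m * (Dd n h i)⁻¹ = if m = n then 1 else 0 := by
  unfold Dd; exact lag_sum n m h hdist hm

lemma double_sum (n : ℕ) (hn : 2 ≤ n) (h : Fin (n + 1) → ℂ) (hdist : Function.Injective h) :
    ∑ i : Fin (n + 1), ∑ j : Fin (n + 1), tt n h i j =
      MvPolynomial.coeff (Finsupp.single 0 n + Finsupp.single 1 n) (Gp n) := by
  classical
  set nn : Fin 2 →₀ ℕ := Finsupp.single 0 n + Finsupp.single 1 n with hnn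
  have hnn0 : nn 0 = n := by simp [hnn, Finsupp.single_apply]
  have hnn1 : nn 1 = n := by simp [hnn, Finsupp.single_apply]
  have ht : ∀ i j, tt n h i j = ∑ d ∈ (Gp n).support,
      MvPolynomial.coeff d (Gp n) *
        ((h i ^ d 0 * (Dd n h i)⁻¹) * (h j ^ d 1 * (Dd n h j)⁻¹)) := by
    intro i j
    rw [tt, div_eq_mul_inv, mul_inv, he, MvPolynomial.eval_eq', Finset.sum_mul]
    refine Finset.sum_congr rfl fun d _ => ?_
    rw [Fin.prod_univ_two]
    simp only [Matrix.cons_val_zero, Matrix.cons_val_one, Matrix.head_cons]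
    ring
  have hrow : ∀ i, ∑ j, tt n h i j = ∑ d ∈ (Gp n).support,
      MvPolynomial.coeff d (Gp n) *
        ((h i ^ d 0 * (Dd n h i)⁻¹) * ∑ j, h j ^ d 1 * (Dd n h j)⁻¹) := by
    intro i
    rw [show (∑ j, tt n h i j) = _ from Finset.sum_congr rfl fun j _ => ht i j,
      Finset.sum_comm]
    refine Finset.sum_congr rfl fun d _ => ?_
    rw [Finset.mul_sum, Finset.mul_sum]
  have hcol : ∑ i : Fin (n + 1), ∑ j : Fin (n + 1), tt n h i j =
      ∑ d ∈ (Gp n).support, MvPolynomial.coeff d (Gp n) *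
        ((∑ i, h i ^ d 0 * (Dd n h i)⁻¹) * ∑ j, h j ^ d 1 * (Dd n h j)⁻¹) := by
    rw [show (∑ i : Fin (n + 1), ∑ j : Fin (n + 1), tt n h i j) = _ from
      Finset.sum_congr rfl fun i _ => hrow i, Finset.sum_comm]
    refine Finset.sum_congr rfl fun d _ => ?_
    rw [Finset.sum_mul, Finset.mul_sum]
  have hdd : ∀ d ∈ (Gp n).support, d 0 + d 1 ≤ 2 * n := by
    intro d hd
    have h1 := MvPolynomial.le_totalDegree hd
    rw [Finsupp.sum_fintype _ _ (fun _ => rfl), Fin.sum_univ_two] at h1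
    exact le_trans h1 (hGdeg n hn)
  have hprod : ∀ d ∈ (Gp n).support,
      (∑ i, h i ^ d 0 * (Dd n h i)⁻¹) * (∑ j, h j ^ d 1 * (Dd n h j)⁻¹) =
        if d = nn then 1 else 0 := by
    intro d hd
    have hsum := hdd d hd
    rcases Nat.lt_trichotomy (d 0) n with h0 | h0 | h0
    · rw [hLs n h hdist (d 0) h0.le, if_neg h0.ne, zero_mul, if_neg]
      intro e; rw [e, hnn0] at h0; exact lt_irrefl n h0
    · have h1le : d 1 ≤ n := by omega
      rw [hLs n h hdist (d 0) h0.le, if_pos h0, one_mul, hLs n h hdist (d 1) h1le]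
      by_cases h1 : d 1 = n
      · rw [if_pos h1, if_pos]
        ext a
        fin_cases a
        · simpa [hnn0] using h0
        · simpa [hnn1] using h1
      · rw [if_neg h1, if_neg]
        intro e; exact h1 (by rw [e, hnn1])
    · have h1lt : d 1 < n := by omega
      rw [hLs n h hdist (d 1) h1lt.le, if_neg h1lt.ne, mul_zero, if_neg]
      intro e; rw [e, hnn0] at h0; exact lt_irrefl n h0
  rw [hcol]
  calc ∑ d ∈ (Gp n).support, MvPolynomial.coeff d (Gp n) *
        ((∑ i, h i ^ d 0 * (Dd n h i)⁻¹) * ∑ j, h j ^ d 1 * (Dd n h j)⁻¹)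
      = ∑ d ∈ (Gp n).support, (if d = nn then MvPolynomial.coeff d (Gp n) else 0) := by
        refine Finset.sum_congr rfl fun d hd => ?_
        rw [hprod d hd]
        split <;> simp
    _ = if nn ∈ (Gp n).support then MvPolynomial.coeff nn (Gp n) else 0 :=
        Finset.sum_ite_eq' _ _ _
    _ = MvPolynomial.coeff nn (Gp n) := by
        by_cases hm : nn ∈ (Gp n).support
        · rw [if_pos hm]
        · rw [if_neg hm]; exact (MvPolynomial.notMem_support_iff.mp hm).symm

lemma key (n : ℕ) (hn : 2 ≤ n) (h : Fin (n + 1) → ℂ) (hdist : Function.Injective h) :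
    (∑ i : Fin (n + 1), ∑ j : Fin (n + 1),
      if i < j then
        (∏ a ∈ Finset.range (2 * n - 2), ((a : ℂ) * h i + ((2 * n - 3 - a : ℕ) : ℂ) * h j)) /
          ∏ k ∈ Finset.univ \ {i, j}, ((h i - h k) * (h j - h k))
      else 0) =
    MvPolynomial.coeff (Finsupp.single 0 n + Finsupp.single 1 n) (Gp n) / 2 := by
  have hA : (∑ i : Fin (n + 1), ∑ j : Fin (n + 1),
      if i < j then
        (∏ a ∈ Finset.range (2 * n - 2), ((a : ℂ) * h i + ((2 * n - 3 - a : ℕ) : ℂ) * h j)) /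
          ∏ k ∈ Finset.univ \ {i, j}, ((h i - h k) * (h j - h k))
      else 0) = ∑ i : Fin (n + 1), ∑ j : Fin (n + 1), if i < j then tt n h i j else 0 := by
    refine Finset.sum_congr rfl fun i _ => Finset.sum_congr rfl fun j _ => ?_
    by_cases hij : i < j
    · rw [if_pos hij, if_pos hij, pair_eq n h hdist i j (ne_of_lt hij)]
    · rw [if_neg hij, if_neg hij]
  have hts : ∀ i j, tt n h i j = tt n h j i := by
    intro i j; rw [tt, tt, hsym n hn, mul_comm]
  have htd : ∀ i, tt n h i i = 0 := by
    intro i; rw [tt, ee]; simp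
  have hpt : ∀ i j : Fin (n + 1), tt n h i j =
      (if i < j then tt n h i j else 0) + (if j < i then tt n h i j else 0) := by
    intro i j
    rcases lt_trichotomy i j with hlt | heq | hgt
    · rw [if_pos hlt, if_neg (asymm hlt), add_zero]
    · subst heq; rw [if_neg (lt_irrefl i), htd i, add_zero]
    · rw [if_neg (asymm hgt), if_pos hgt, zero_add]
  have hswap : (∑ i : Fin (n + 1), ∑ j : Fin (n + 1), if j < i then tt n h i j else 0) =
      ∑ i : Fin (n + 1), ∑ j : Fin (n + 1), if i < j then tt n h i j else 0 := by
    rw [Finset.sum_comm]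
    exact Finset.sum_congr rfl fun j _ => Finset.sum_congr rfl fun i _ => by rw [hts]
  have hsplit : (∑ i : Fin (n + 1), ∑ j : Fin (n + 1), tt n h i j) =
      2 * ∑ i : Fin (n + 1), ∑ j : Fin (n + 1), (if i < j then tt n h i j else 0) := by
    calc (∑ i : Fin (n + 1), ∑ j : Fin (n + 1), tt n h i j)
        = ∑ i : Fin (n + 1), ∑ j : Fin (n + 1),
            ((if i < j then tt n h i j else 0) + (if j < i then tt n h i j else 0)) :=
          Finset.sum_congr rfl fun i _ => Finset.sum_congr rfl fun j _ => hpt i j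
      _ = (∑ i : Fin (n + 1), ∑ j : Fin (n + 1), if i < j then tt n h i j else 0) +
          (∑ i : Fin (n + 1), ∑ j : Fin (n + 1), if j < i then tt n h i j else 0) := by
          simp only [Finset.sum_add_distrib]
      _ = 2 * ∑ i : Fin (n + 1), ∑ j : Fin (n + 1), (if i < j then tt n h i j else 0) := by
          rw [hswap]; ring
  have hds := double_sum n hn h hdist
  rw [hsplit] at hds
  rw [hA]
  linear_combination hds / 2

theorem bott_sum_lines_constant (n : ℕ) (hn : 2 ≤ n) (h g : Fin (n + 1) → ℂ)
    (hdist : Function.Injective h) (gdist : Function.Injective g) :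
    (∑ i : Fin (n + 1), ∑ j : Fin (n + 1),
      if i < j then
        (∏ a ∈ Finset.range (2 * n - 2), ((a : ℂ) * h i + ((2 * n - 3 - a : ℕ) : ℂ) * h j)) /
          ∏ k ∈ Finset.univ \ {i, j}, ((h i - h k) * (h j - h k))
      else 0) =
    (∑ i : Fin (n + 1), ∑ j : Fin (n + 1),
      if i < j then
        (∏ a ∈ Finset.range (2 * n - 2), ((a : ℂ) * g i + ((2 * n - 3 - a : ℕ) : ℂ) * g j)) /
          ∏ k ∈ Finset.univ \ {i, j}, ((g i - g k) * (g j - g k))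
      else 0) := by
  rw [key n hn h hdist, key n hn g gdist]
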